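/- arXiv:1402.1812 — 5 statements merged into one kernel-verified Lean document; each statement's English description precedes it below -/
import Mathlib

section
/- The polynomial z² - (yt)z·u + y²t·u ∈ C[[t,y]][z], where u = (1+y²)^{-1} is a unit of C[[t,y]], is irreducible over the formal power series ring C[[t,y]]; equivalently, it cannot be factored as (z-g)(z-h) with g,h in the maximal ideal of C[[t,y]]. -/
open MvPowerSeries Polynomial

noncomputable def psi0 : MvPowerSeries (Fin 2) ℂ →+* MvPowerSeries (Fin 2) ℂ where
  toFun f := fun d => if d 0 = 0 then MvPowerSeries.coeff d f else 0
  map_one' := by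
    ext d
    show (if d 0 = 0 then MvPowerSeries.coeff d 1 else 0) = MvPowerSeries.coeff d 1
    by_cases h : d 0 = 0
    · rw [if_pos h]
    · rw [if_neg h, MvPowerSeries.coeff_one, if_neg]
      rintro rfl; simp at h
  map_mul' f g := by
    ext d
    show (if d 0 = 0 then MvPowerSeries.coeff d (f * g) else 0) = MvPowerSeries.coeff d _
    rw [MvPowerSeries.coeff_mul]
    by_cases h : d 0 = 0
    · rw [if_pos h]
      refine Eq.trans ?_ (MvPowerSeries.coeff_mul ..).symm
      apply Finset.sum_congr rfl
      rintro ⟨p, q⟩ hpq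
      rw [Finset.HasAntidiagonal.mem_antidiagonal] at hpq
      have hpq0 : p 0 + q 0 = 0 := by rw [← Finsupp.add_apply, hpq, h]
      show _ = (if p 0 = 0 then MvPowerSeries.coeff p f else 0) *
        (if q 0 = 0 then MvPowerSeries.coeff q g else 0)
      rw [if_pos (by omega : p 0 = 0), if_pos (by omega : q 0 = 0)]
    · rw [if_neg h]
      symm
      apply Finset.sum_eq_zero
      rintro ⟨p, q⟩ hpq
      simp only [Finset.HasAntidiagonal.mem_antidiagonal] at hpq
      show (if p 0 = 0 then MvPowerSeries.coeff p f else 0) *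
        (if q 0 = 0 then MvPowerSeries.coeff q g else 0) = 0
      by_cases hp : p 0 = 0
      · have hq : q 0 ≠ 0 := by
          intro hq; apply h; rw [← hpq, Finsupp.add_apply, hp, hq]
        rw [if_neg hq, mul_zero]
      · rw [if_neg hp, zero_mul]
  map_zero' := by
    ext d
    show (if d 0 = 0 then MvPowerSeries.coeff d 0 else 0) = MvPowerSeries.coeff d 0
    simp
  map_add' f g := by
    ext d
    show (if d 0 = 0 then MvPowerSeries.coeff d (f + g) else 0) =
      (if d 0 = 0 then MvPowerSeries.coeff d f else 0) +
      (if d 0 = 0 then MvPowerSeries.coeff d g else 0)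
    by_cases h : d 0 = 0 <;> simp [h]

lemma psi0_coeff (f : MvPowerSeries (Fin 2) ℂ) (d : Fin 2 →₀ ℕ) :
    MvPowerSeries.coeff d (psi0 f) = if d 0 = 0 then MvPowerSeries.coeff d f else 0 := rfl

lemma psi0_eq_zero_iff (f : MvPowerSeries (Fin 2) ℂ) :
    psi0 f = 0 ↔ (MvPowerSeries.X 0 : MvPowerSeries (Fin 2) ℂ) ∣ f := by
  rw [MvPowerSeries.X_dvd_iff]
  constructor
  · intro h m hm
    have := congrArg (MvPowerSeries.coeff m) h
    rwa [psi0_coeff, if_pos hm, map_zero] at this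
  · intro h
    ext d
    rw [psi0_coeff, map_zero (MvPowerSeries.coeff d)]
    split_ifs with hd
    · exact h d hd
    · rfl

lemma psi0_X0 : psi0 (MvPowerSeries.X 0) = 0 := by
  rw [psi0_eq_zero_iff]

lemma psi0_X1 : psi0 (MvPowerSeries.X 1) = MvPowerSeries.X 1 := by
  ext d
  rw [psi0_coeff]
  split_ifs with hd
  · rfl
  · rw [MvPowerSeries.coeff_X, if_neg]
    rintro rfl; simp at hd

lemma X_ne_zero' (s : Fin 2) : (MvPowerSeries.X s : MvPowerSeries (Fin 2) ℂ) ≠ 0 := by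
  intro h
  have := congrArg (MvPowerSeries.coeff (Finsupp.single s 1)) h
  rw [MvPowerSeries.coeff_X, if_pos rfl, map_zero] at this
  exact one_ne_zero this

lemma key (t y u : MvPowerSeries (Fin 2) ℂ)
    (ht : t = MvPowerSeries.X 0) (hy : y = MvPowerSeries.X 1)
    (hu : u * (1 + y ^ 2) = 1)
    (c₁ c₂ : MvPowerSeries (Fin 2) ℂ)
    (h1 : y ^ 2 * t * u = c₁ * c₂)
    (h2 : -(y * t * u) = c₁ + c₂) : False := by
  have hconst : MvPowerSeries.constantCoeff u = 1 := by
    have := congrArg (MvPowerSeries.constantCoeff) hu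
    simpa [hy] using this
  have hψt : psi0 t = 0 := by rw [ht]; exact psi0_X0
  have hψy : psi0 y = y := by rw [hy]; exact psi0_X1
  have hz : psi0 c₁ * psi0 c₂ = 0 := by
    rw [← map_mul, ← h1, map_mul, map_mul, hψt, mul_zero, zero_mul]
  have hs : psi0 c₁ + psi0 c₂ = 0 := by
    rw [← map_add, ← h2, map_neg, map_mul, map_mul, hψt, mul_zero, zero_mul, neg_zero]
  have hboth : psi0 c₁ = 0 ∧ psi0 c₂ = 0 := by
    rcases mul_eq_zero.mp hz with h | h
    · exact ⟨h, by rwa [h, zero_add] at hs⟩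
    · exact ⟨by rwa [h, add_zero] at hs, h⟩
  obtain ⟨a, ha⟩ := (psi0_eq_zero_iff c₁).mp hboth.1
  obtain ⟨b, hb⟩ := (psi0_eq_zero_iff c₂).mp hboth.2
  rw [← ht] at ha hb
  have htne : t ≠ 0 := by rw [ht]; exact X_ne_zero' 0
  have hyne : y ≠ 0 := by rw [hy]; exact X_ne_zero' 1
  have hcancel : y ^ 2 * u = t * (a * b) := by
    have h3 : t * (y ^ 2 * u) = t * (t * (a * b)) := by
      rw [ha, hb] at h1; ring_nf at h1 ⊢; linear_combination h1
    exact mul_left_cancel₀ htne h3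
  have h4 := congrArg psi0 hcancel
  rw [map_mul, map_mul, map_pow, hψy, hψt, zero_mul] at h4
  rcases mul_eq_zero.mp h4 with h | h
  · exact pow_ne_zero 2 hyne h
  · have h5 := (psi0_eq_zero_iff u).mp h
    rw [MvPowerSeries.X_dvd_iff] at h5
    have h0 := h5 0 rfl
    rw [MvPowerSeries.coeff_zero_eq_constantCoeff, hconst] at h0
    exact one_ne_zero h0

/-- **Irreducibility of `z² - (yt)u·z + y²t·u` over `ℂ[[t,y]]`.**
Here `u = (1+y²)⁻¹` is a unit of the formal power series ring `ℂ[[t,y]]`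
(`t = X 0`, `y = X 1`).  The polynomial is irreducible; equivalently, it cannot be
factored as `(z - g)(z - h)` with `g, h` in the maximal ideal of `ℂ[[t,y]]`. -/
theorem stmt1
    (t y u : MvPowerSeries (Fin 2) ℂ)
    (ht : t = MvPowerSeries.X 0) (hy : y = MvPowerSeries.X 1)
    (hu : u * (1 + y ^ 2) = 1) :
    Irreducible (Polynomial.X ^ 2 - Polynomial.C (y * t * u) * Polynomial.X
        + Polynomial.C (y ^ 2 * t * u) :
      Polynomial (MvPowerSeries (Fin 2) ℂ)) ∧
    ¬ ∃ g h : MvPowerSeries (Fin 2) ℂ,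
        MvPowerSeries.constantCoeff g = 0 ∧
        MvPowerSeries.constantCoeff h = 0 ∧
        (Polynomial.X ^ 2 - Polynomial.C (y * t * u) * Polynomial.X
            + Polynomial.C (y ^ 2 * t * u) :
          Polynomial (MvPowerSeries (Fin 2) ℂ)) =
          (Polynomial.X - Polynomial.C g) * (Polynomial.X - Polynomial.C h) := by
  set P : Polynomial (MvPowerSeries (Fin 2) ℂ) :=
    Polynomial.X ^ 2 - Polynomial.C (y * t * u) * Polynomial.X
      + Polynomial.C (y ^ 2 * t * u) with hP
  have hPform : P = Polynomial.X ^ 2 +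
      (Polynomial.C (-(y * t * u)) * Polynomial.X + Polynomial.C (y ^ 2 * t * u)) := by
    rw [hP, map_neg]; ring
  have hmonic : P.Monic := by
    rw [hPform]
    apply Polynomial.monic_X_pow_add
    exact lt_of_le_of_lt (Polynomial.degree_linear_le) (by norm_num)
  have hdeg : P.natDegree = 2 := by
    apply Polynomial.natDegree_eq_of_degree_eq_some
    rw [hPform, Polynomial.degree_add_eq_left_of_degree_lt, Polynomial.degree_X_pow]
    rw [Polynomial.degree_X_pow]
    exact lt_of_le_of_lt (Polynomial.degree_linear_le) (by norm_num)
  have hc0 : P.coeff 0 = y ^ 2 * t * u := by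
    simp only [hP, Polynomial.coeff_add, Polynomial.coeff_sub, Polynomial.coeff_X_pow,
      Polynomial.coeff_C_mul, Polynomial.coeff_X_zero, Polynomial.coeff_C]
    norm_num
  have hc1 : P.coeff 1 = -(y * t * u) := by
    simp only [hP, Polynomial.coeff_add, Polynomial.coeff_sub, Polynomial.coeff_X_pow,
      Polynomial.coeff_C_mul, Polynomial.coeff_X_one, Polynomial.coeff_C]
    norm_num
  have hirr : Irreducible P := by
    by_contra hni
    obtain ⟨c₁, c₂, hmul, hadd⟩ :=
      (hmonic.not_irreducible_iff_exists_add_mul_eq_coeff hdeg).mp hni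
    exact key t y u ht hy hu c₁ c₂ (hc0 ▸ hmul) (hc1 ▸ hadd)
  refine ⟨hirr, ?_⟩
  rintro ⟨g, h, -, -, hfac⟩
  rcases hirr.isUnit_or_isUnit hfac with h' | h'
  · exact (Polynomial.not_isUnit_X_sub_C g) h'
  · exact (Polynomial.not_isUnit_X_sub_C h) h'
end

section
/- For n ≥ 2 and ε > 0, the function ψ̃(z) = (1/2)log(1+‖z‖²) + ε·log|1 + z_n(e^{1/ε} − 1)| on C^n satisfies: (i) ψ̃ is plurisubharmonic on C^n; (ii) ψ̃(z) ≤ (1+ε)log⁺‖z‖ + C for some constant C; (iii) ψ̃(z) = (1/2)log(1+‖z‖²) on {z_n = 0} and ψ̃(z) = (1/2)log(1+‖z‖²) + 1 on {z_n = 1}. -/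
open Real Metric

/-- Extended-real-valued logarithm of a nonnegative number: `elog 0 = -∞`. -/
noncomputable def elog (x : ℝ) : EReal := if x = 0 then ⊥ else (Real.log x : EReal)

/-- `u : E → EReal` is plurisubharmonic on `s`: it is upper semicontinuous on `s` and its
restriction to every complex line is subharmonic, expressed by the maximum principle with
respect to real parts of complex polynomials (which are the harmonic polynomials) on closed
discs. -/
def PlurisubharmonicOn {E : Type*} [NormedAddCommGroup E] [NormedSpace ℂ E]
    (u : E → EReal) (s : Set E) : Prop :=
  UpperSemicontinuousOn u s ∧
    ∀ a b : E, ∀ c : ℂ, ∀ r : ℝ, 0 < r →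
      (∀ t ∈ Metric.closedBall c r, a + t • b ∈ s) →
      ∀ p : Polynomial ℂ,
        (∀ t ∈ Metric.sphere c r, u (a + t • b) ≤ ((p.eval t).re : EReal)) →
        ∀ t ∈ Metric.closedBall c r, u (a + t • b) ≤ ((p.eval t).re : EReal)

/-- The complex absolute value, as the absolute value induced by the norm. -/
noncomputable def Complex.abs : AbsoluteValue ℂ ℝ := NormedField.toAbsoluteValue ℂ

theorem Complex.norm_eq_abs (z : ℂ) : ‖z‖ = Complex.abs z := rfl

theorem Complex.continuous_abs : Continuous Complex.abs := continuous_norm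

theorem Complex.abs_ofReal (r : ℝ) : Complex.abs (r : ℂ) = |r| := by
  rw [← Complex.norm_eq_abs, Complex.norm_real, Real.norm_eq_abs]

theorem Complex.abs_exp (z : ℂ) : Complex.abs (Complex.exp z) = Real.exp z.re := Complex.norm_exp z

private lemma coord_abs_le_norm {m : ℕ} (z : EuclideanSpace ℂ (Fin m)) (i : Fin m) :
    Complex.abs (z i) ≤ ‖z‖ := by
  rw [← Complex.norm_eq_abs, EuclideanSpace.norm_eq]
  have h : ‖z i‖ ^ 2 ≤ ∑ j, ‖z j‖ ^ 2 :=
    Finset.single_le_sum (f := fun j => ‖z j‖ ^ 2) (fun j _ => sq_nonneg _) (Finset.mem_univ i)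
  calc ‖z i‖ = Real.sqrt (‖z i‖ ^ 2) := (Real.sqrt_sq (norm_nonneg _)).symm
    _ ≤ Real.sqrt (∑ j, ‖z j‖ ^ 2) := Real.sqrt_le_sqrt h

private lemma abs_one_add_inner_le {E : Type*} [NormedAddCommGroup E] [InnerProductSpace ℂ E]
    (w z : E) :
    Complex.abs (1 + (inner ℂ w z : ℂ)) ≤ Real.sqrt (1 + ‖w‖ ^ 2) * Real.sqrt (1 + ‖z‖ ^ 2) := by
  have h1 : Complex.abs (1 + (inner ℂ w z : ℂ)) ≤ 1 + ‖w‖ * ‖z‖ := by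
    rw [← Complex.norm_eq_abs]
    calc ‖1 + (inner ℂ w z : ℂ)‖ ≤ ‖(1 : ℂ)‖ + ‖(inner ℂ w z : ℂ)‖ := norm_add_le _ _
      _ ≤ 1 + ‖w‖ * ‖z‖ := by rw [norm_one]; exact add_le_add_right (norm_inner_le_norm (𝕜 := ℂ) w z) 1
  refine h1.trans ?_
  rw [← Real.sqrt_mul (by positivity)]
  refine (Real.le_sqrt (by positivity) (by positivity)).mpr ?_
  nlinarith [sq_nonneg (‖w‖ - ‖z‖), norm_nonneg w, norm_nonneg z,
    mul_nonneg (norm_nonneg w) (norm_nonneg z)]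

private lemma maxprin (ε : ℝ) (hε : 0 < ε) (A B α β : ℂ) (c : ℂ) (r : ℝ) (hr : 0 < r)
    (p : Polynomial ℂ)
    (hbd : ∀ t ∈ sphere c r,
      Complex.abs (A + t * B) * Complex.abs (α + t * β) ^ ε ≤ Real.exp ((p.eval t).re)) :
    ∀ t₀ ∈ closedBall c r,
      Complex.abs (A + t₀ * B) * Complex.abs (α + t₀ * β) ^ ε ≤ Real.exp ((p.eval t₀).re) := by
  intro t₀ ht₀
  by_cases hk0 : α + t₀ * β = 0
  · rw [hk0]
    simp [Real.zero_rpow hε.ne', (Real.exp_pos _).le]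
  by_cases hh0 : A + t₀ * B = 0
  · rw [hh0]
    simp only [map_zero, zero_mul]
    exact (Real.exp_pos _).le
  set x₀ := Complex.abs (A + t₀ * B) with hx₀def
  set y₀ := Complex.abs (α + t₀ * β) with hy₀def
  have hx₀p : 0 < x₀ := AbsoluteValue.pos _ hh0
  have hy₀p : 0 < y₀ := AbsoluteValue.pos _ hk0
  set K : ℝ := Complex.abs α + (Complex.abs c + r) * Complex.abs β with hKdef
  set M : ℝ := max 1 K with hMdef
  have hM1 : (1 : ℝ) ≤ M := le_max_left _ _
  have key : ∀ q : ℕ, 1 ≤ q →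
      (q : ℝ) * Real.log x₀ + (⌈ε * (q : ℝ)⌉₊ : ℝ) * Real.log y₀ ≤
        (q : ℝ) * (p.eval t₀).re + Real.log M := by
    intro q hq
    set m := ⌈ε * (q : ℝ)⌉₊ with hmdef
    have hqpos : (0 : ℝ) < q := by exact_mod_cast hq
    have hεq : 0 < ε * (q : ℝ) := by positivity
    have hm1 : ε * (q : ℝ) ≤ (m : ℝ) := Nat.le_ceil _
    have hm2 : (m : ℝ) < ε * (q : ℝ) + 1 := Nat.ceil_lt_add_one hεq.le
    have hmpos : 0 < m := Nat.ceil_pos.mpr hεq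
    set F : ℂ → ℂ :=
      fun t => (A + t * B) ^ q * (α + t * β) ^ m * Complex.exp (-(q : ℂ) * p.eval t) with hFdef
    have hdiff : Differentiable ℂ F := by
      apply Differentiable.mul
      · apply Differentiable.mul
        · exact ((differentiable_const A).add (differentiable_id.mul_const B)).pow q
        · exact ((differentiable_const α).add (differentiable_id.mul_const β)).pow m
      · exact Complex.differentiable_exp.comp ((differentiable_const _).mul p.differentiable)
    have habs : ∀ t : ℂ, Complex.abs (F t)
        = Complex.abs (A + t * B) ^ q * Complex.abs (α + t * β) ^ m
          * Real.exp (-((q : ℝ) * (p.eval t).re)) := by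
      intro t
      have hre : (-(q : ℂ) * p.eval t).re = -((q : ℝ) * (p.eval t).re) := by
        simp [Complex.mul_re]
      rw [hFdef]
      simp only [map_mul, map_pow, Complex.abs_exp, hre]
    have hsb : ∀ t ∈ frontier (ball c r), ‖F t‖ ≤ M := by
      rw [frontier_ball c hr.ne']
      intro t ht
      rw [Complex.norm_eq_abs, habs t]
      set x := Complex.abs (A + t * B) with hxdef
      set y := Complex.abs (α + t * β) with hydef
      have hxn : 0 ≤ x := AbsoluteValue.nonneg _ _
      have hyn : 0 ≤ y := AbsoluteValue.nonneg _ _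
      have hb := hbd t ht
      by_cases hy0 : y = 0
      · rw [hy0, zero_pow hmpos.ne']
        simpa using le_trans zero_le_one hM1
      · have hyp : 0 < y := lt_of_le_of_ne hyn (Ne.symm hy0)
        have h1 : x ^ q * y ^ (ε * (q : ℝ)) ≤ Real.exp ((q : ℝ) * (p.eval t).re) := by
          have hpow := pow_le_pow_left₀ (by positivity) hb q
          calc x ^ q * y ^ (ε * (q : ℝ)) = (x * y ^ ε) ^ q := by
                rw [mul_pow, Real.rpow_mul hyn, Real.rpow_natCast]
            _ ≤ (Real.exp ((p.eval t).re)) ^ q := hpow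
            _ = Real.exp ((q : ℝ) * (p.eval t).re) := (Real.exp_nat_mul _ q).symm
        have h2 : (y : ℝ) ^ m = y ^ (ε * (q : ℝ)) * y ^ ((m : ℝ) - ε * (q : ℝ)) := by
          rw [← Real.rpow_natCast y m, ← Real.rpow_add hyp]
          ring_nf
        have h3 : y ^ ((m : ℝ) - ε * (q : ℝ)) ≤ M := by
          rcases le_or_gt y 1 with hy1 | hy1
          · exact le_trans (Real.rpow_le_one hyn hy1 (by linarith)) hM1
          · have h4 : y ^ ((m : ℝ) - ε * (q : ℝ)) ≤ y ^ (1 : ℝ) :=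
              Real.rpow_le_rpow_of_exponent_le hy1.le (by linarith)
            rw [Real.rpow_one] at h4
            refine h4.trans (le_trans ?_ (le_max_right 1 K))
            have hdist : Complex.abs (t - c) = r := by
              simpa [Complex.dist_eq, ← Complex.norm_eq_abs] using ht
            have htt : Complex.abs t ≤ Complex.abs c + r := by
              calc Complex.abs t = Complex.abs (c + (t - c)) := by ring_nf
                _ ≤ Complex.abs c + Complex.abs (t - c) := AbsoluteValue.add_le _ _ _
                _ = Complex.abs c + r := by rw [hdist]
            calc y ≤ Complex.abs α + Complex.abs (t * β) := AbsoluteValue.add_le _ _ _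
              _ = Complex.abs α + Complex.abs t * Complex.abs β := by rw [map_mul]
              _ ≤ K := by
                  rw [hKdef]
                  have hβ : 0 ≤ Complex.abs β := AbsoluteValue.nonneg _ _
                  nlinarith
        have h5 : x ^ q * y ^ (ε * (q : ℝ)) * Real.exp (-((q : ℝ) * (p.eval t).re)) ≤ 1 := by
          have h6 := mul_le_mul_of_nonneg_right h1 (Real.exp_pos (-((q : ℝ) * (p.eval t).re))).le
          rw [← Real.exp_add] at h6
          simpa using h6
        calc x ^ q * y ^ m * Real.exp (-((q : ℝ) * (p.eval t).re))
            = (x ^ q * y ^ (ε * (q : ℝ)) * Real.exp (-((q : ℝ) * (p.eval t).re)))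
              * y ^ ((m : ℝ) - ε * (q : ℝ)) := by rw [h2]; ring
          _ ≤ 1 * M := mul_le_mul h5 h3 (by positivity) zero_le_one
          _ = M := one_mul M
    have hmax : ‖F t₀‖ ≤ M :=
      Complex.norm_le_of_forall_mem_frontier_norm_le isBounded_ball hdiff.diffContOnCl hsb
        (by rw [closure_ball c hr.ne']; exact ht₀)
    rw [Complex.norm_eq_abs, habs t₀] at hmax
    have hpos : 0 < x₀ ^ q * y₀ ^ m * Real.exp (-((q : ℝ) * (p.eval t₀).re)) := by positivity
    have hlog := (Real.log_le_log_iff hpos (by positivity : (0:ℝ) < M)).mpr hmax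
    rw [Real.log_mul (by positivity) (Real.exp_ne_zero _),
      Real.log_mul (by positivity) (by positivity), Real.log_pow, Real.log_pow,
      Real.log_exp] at hlog
    linarith
  have hgoal : Real.log x₀ + ε * Real.log y₀ ≤ (p.eval t₀).re := by
    refine le_of_forall_pos_le_add fun δ hδ => ?_
    set L := Real.log M with hLdef
    have hL : 0 ≤ L := Real.log_nonneg hM1
    set D := |Real.log y₀| with hDdef
    have hD : 0 ≤ D := abs_nonneg _
    obtain ⟨q, hq1, hq2⟩ : ∃ q : ℕ, 1 ≤ q ∧ L + D ≤ (q : ℝ) * δ := by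
      refine ⟨max 1 ⌈(L + D) / δ⌉₊, le_max_left _ _, ?_⟩
      have h1 : (L + D) / δ ≤ (⌈(L + D) / δ⌉₊ : ℝ) := Nat.le_ceil _
      have h2 : ((⌈(L + D) / δ⌉₊ : ℕ) : ℝ) ≤ ((max 1 ⌈(L + D) / δ⌉₊ : ℕ) : ℝ) := by
        exact_mod_cast le_max_right 1 _
      rw [div_le_iff₀ hδ] at h1
      nlinarith
    have hqpos : (0 : ℝ) < q := by exact_mod_cast hq1
    have hk := key q hq1
    set m := ⌈ε * (q : ℝ)⌉₊ with hmdef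
    have hm1 : ε * (q : ℝ) ≤ (m : ℝ) := Nat.le_ceil _
    have hm2 : (m : ℝ) < ε * (q : ℝ) + 1 := Nat.ceil_lt_add_one (by positivity)
    have h1 : ε * (q : ℝ) * Real.log y₀ ≤ (m : ℝ) * Real.log y₀ + D := by
      rcases le_or_gt 0 (Real.log y₀) with h | h
      · have hD' : D = Real.log y₀ := abs_of_nonneg h
        nlinarith
      · have hD' : D = -Real.log y₀ := abs_of_neg h
        nlinarith
    have h2 : (q : ℝ) * (Real.log x₀ + ε * Real.log y₀) ≤ (q : ℝ) * ((p.eval t₀).re + δ) := by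
      nlinarith
    exact le_of_mul_le_mul_left h2 hqpos
  calc x₀ * y₀ ^ ε = Real.exp (Real.log x₀ + ε * Real.log y₀) := by
        rw [Real.exp_add, Real.exp_log hx₀p, Real.rpow_def_of_pos hy₀p, mul_comm (Real.log y₀) ε]
    _ ≤ Real.exp ((p.eval t₀).re) := Real.exp_le_exp.mpr hgoal

private lemma psi_eq (ε : ℝ) (hε : 0 < ε) (fz : ℝ) (k : ℂ) :
    (fz : EReal) + ((ε : ℝ) : EReal) * elog (Complex.abs k)
      = if k = 0 then ⊥ else ((fz + ε * Real.log (Complex.abs k) : ℝ) : EReal) := by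
  by_cases hk : k = 0
  · simp [hk, elog, EReal.coe_mul_bot_of_pos hε]
  · have h : Complex.abs k ≠ 0 := by simpa using hk
    simp only [elog, if_neg h, if_neg hk, ← EReal.coe_mul, ← EReal.coe_add]

/-- **The explicit extension with growth `1 + ε`.**
For `n ≥ 2` (here `n = n' + 2`) and `ε > 0`, the function
`ψ̃(z) = (1/2)·log(1+‖z‖²) + ε·log|1 + z_n(e^{1/ε} - 1)|` on `ℂⁿ` satisfies:
(i) `ψ̃` is plurisubharmonic on `ℂⁿ`;
(ii) `ψ̃(z) ≤ (1+ε)·log⁺‖z‖ + C` for some constant `C`;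
(iii) `ψ̃(z) = (1/2)·log(1+‖z‖²)` on `{z_n = 0}` and
`ψ̃(z) = (1/2)·log(1+‖z‖²) + 1` on `{z_n = 1}`. -/
theorem stmt7 (n' : ℕ) (ε : ℝ) (hε : 0 < ε)
    (ψ : EuclideanSpace ℂ (Fin (n' + 2)) → EReal)
    (hψ : ψ = fun z => (((1 / 2) * Real.log (1 + ‖z‖ ^ 2) : ℝ) : EReal) +
      ((ε : ℝ) : EReal) *
        elog ‖(1 + z (Fin.last (n' + 1)) * ((Real.exp (1 / ε) : ℝ) - 1) : ℂ)‖) :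
    PlurisubharmonicOn ψ Set.univ ∧
    (∃ C : ℝ, ∀ z, ψ z ≤ (((1 + ε) * max 0 (Real.log ‖z‖) + C : ℝ) : EReal)) ∧
    (∀ z, z (Fin.last (n' + 1)) = 0 →
      ψ z = (((1 / 2) * Real.log (1 + ‖z‖ ^ 2) : ℝ) : EReal)) ∧
    (∀ z, z (Fin.last (n' + 1)) = 1 →
      ψ z = (((1 / 2) * Real.log (1 + ‖z‖ ^ 2) + 1 : ℝ) : EReal)) := by
  have hE1 : (1 : ℝ) < Real.exp (1 / ε) := Real.one_lt_exp_iff.mpr (by positivity)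
  set k : EuclideanSpace ℂ (Fin (n' + 2)) → ℂ :=
    fun z => 1 + z (Fin.last (n' + 1)) * (((Real.exp (1 / ε) : ℝ) : ℂ) - 1) with hkdef
  set f : EuclideanSpace ℂ (Fin (n' + 2)) → ℝ :=
    fun z => 1 / 2 * Real.log (1 + ‖z‖ ^ 2) with hfdef
  have hψ' : ∀ z, ψ z =
      if k z = 0 then ⊥ else ((f z + ε * Real.log (Complex.abs (k z)) : ℝ) : EReal) := by
    intro z
    rw [hψ]
    exact psi_eq ε hε _ _
  have hkc : Continuous k := by
    apply continuous_const.add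
    exact ((EuclideanSpace.proj (𝕜 := ℂ) (Fin.last (n' + 1))).continuous).mul continuous_const
  have hfc : Continuous f := by
    apply continuous_const.mul
    exact (continuous_const.add (continuous_norm.pow 2)).log
      (fun x => by positivity : ∀ x : EuclideanSpace ℂ (Fin (n' + 2)), 1 + ‖x‖ ^ 2 ≠ 0)
  refine ⟨⟨?_, ?_⟩, ?_, ?_, ?_⟩
  · -- upper semicontinuity
    apply UpperSemicontinuous.upperSemicontinuousOn
    intro x y hy
    by_cases hkx : k x = 0
    · rw [hψ' x, if_pos hkx] at hy
      obtain ⟨d, hd1, hd2⟩ := EReal.lt_iff_exists_real_btwn.mp hy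
      have hev1 : ∀ᶠ z in nhds x, f z < f x + 1 :=
        Filter.Tendsto.eventually_lt_const (lt_add_one (f x)) hfc.continuousAt
      have hev2 : ∀ᶠ z in nhds x,
          Complex.abs (k z) < Real.exp ((d - f x - 2) / ε) := by
        refine Filter.Tendsto.eventually_lt_const ?_
          ((Complex.continuous_abs.comp hkc).continuousAt)
        simp only [Function.comp_apply, hkx, map_zero]
        exact Real.exp_pos _
      filter_upwards [hev1, hev2] with z h1 h2
      rw [hψ' z]
      split_ifs with hz
      · exact lt_trans hd1 hd2
      · refine lt_trans ?_ hd2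
        rw [EReal.coe_lt_coe_iff]
        have habs0 : 0 < Complex.abs (k z) := AbsoluteValue.pos _ hz
        have hlt := Real.log_lt_log habs0 h2
        rw [Real.log_exp] at hlt
        have hlt2 := mul_lt_mul_of_pos_left hlt hε
        have heq : ε * ((d - f x - 2) / ε) = d - f x - 2 := by field_simp
        rw [heq] at hlt2
        linarith
    · have hFc : ContinuousAt (fun z => f z + ε * Real.log (Complex.abs (k z))) x := by
        apply ContinuousAt.add hfc.continuousAt
        apply ContinuousAt.mul continuousAt_const
        exact (Real.continuousAt_log (by simpa using hkx)).comp
          (Complex.continuous_abs.comp hkc).continuousAt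
      rw [hψ' x, if_neg hkx] at hy
      obtain ⟨d, hd1, hd2⟩ := EReal.lt_iff_exists_real_btwn.mp hy
      have hd1' : f x + ε * Real.log (Complex.abs (k x)) < d := by exact_mod_cast hd1
      have hev1 : ∀ᶠ z in nhds x, f z + ε * Real.log (Complex.abs (k z)) < d :=
        Filter.Tendsto.eventually_lt_const hd1' hFc
      have hev2 : ∀ᶠ z in nhds x, k z ≠ 0 := hkc.continuousAt.eventually_ne hkx
      filter_upwards [hev1, hev2] with z h1 h2
      rw [hψ' z, if_neg h2]
      exact lt_trans (EReal.coe_lt_coe_iff.mpr h1) hd2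
  · -- maximum principle along lines
    intro a b c r hr _ p hsph t₀ ht₀
    set α : ℂ := 1 + a (Fin.last (n' + 1)) * (((Real.exp (1 / ε) : ℝ) : ℂ) - 1) with hαdef
    set β : ℂ := b (Fin.last (n' + 1)) * (((Real.exp (1 / ε) : ℝ) : ℂ) - 1) with hβdef
    have hline : ∀ t : ℂ, k (a + t • b) = α + t * β := by
      intro t
      show 1 + (a + t • b) (Fin.last (n' + 1)) * _ = _
      have happ : (a + t • b) (Fin.last (n' + 1))
          = a (Fin.last (n' + 1)) + t * b (Fin.last (n' + 1)) := rfl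
      rw [happ, hαdef, hβdef]
      ring
    by_cases hk0 : α + t₀ * β = 0
    · rw [hψ' _, if_pos (by rw [hline]; exact hk0)]
      exact bot_le
    · have hSpos : 0 < Real.sqrt (1 + ‖a + t₀ • b‖ ^ 2) := Real.sqrt_pos.mpr (by positivity)
      set S : ℝ := Real.sqrt (1 + ‖a + t₀ • b‖ ^ 2) with hSdef
      set w : EuclideanSpace ℂ (Fin (n' + 2)) := a + t₀ • b with hwdef
      set A : ℂ := (1 + (inner ℂ w a : ℂ)) / (S : ℂ) with hAdef
      set B : ℂ := (inner ℂ w b : ℂ) / (S : ℂ) with hBdef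
      have hSne : (S : ℂ) ≠ 0 := by exact_mod_cast (ne_of_gt hSpos)
      have hAB : ∀ t : ℂ, A + t * B = (1 + (inner ℂ w (a + t • b) : ℂ)) / (S : ℂ) := by
        intro t
        rw [inner_add_right, inner_smul_right, hAdef, hBdef]
        field_simp
        ring
      have habsAB : ∀ t : ℂ, Complex.abs (A + t * B) ≤ Real.sqrt (1 + ‖a + t • b‖ ^ 2) := by
        intro t
        rw [hAB t, map_div₀, Complex.abs_ofReal, abs_of_pos hSpos, div_le_iff₀ hSpos]
        calc Complex.abs (1 + (inner ℂ w (a + t • b) : ℂ))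
            ≤ Real.sqrt (1 + ‖w‖ ^ 2) * Real.sqrt (1 + ‖a + t • b‖ ^ 2) :=
              abs_one_add_inner_le _ _
          _ = Real.sqrt (1 + ‖a + t • b‖ ^ 2) * S := by rw [hSdef, hwdef]; ring
      have hbd : ∀ t ∈ sphere c r,
          Complex.abs (A + t * B) * Complex.abs (α + t * β) ^ ε
            ≤ Real.exp ((p.eval t).re) := by
        intro t ht
        have hs := hsph t ht
        by_cases hkt : α + t * β = 0
        · rw [hkt]
          simp [Real.zero_rpow hε.ne', (Real.exp_pos _).le]
        · rw [hψ' _, if_neg (by rw [hline]; exact hkt), hline t] at hs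
          have hreal : f (a + t • b) + ε * Real.log (Complex.abs (α + t * β))
              ≤ (p.eval t).re := by exact_mod_cast hs
          have hktpos : 0 < Complex.abs (α + t * β) := AbsoluteValue.pos _ hkt
          by_cases hAt : A + t * B = 0
          · rw [hAt]
            simp [(Real.exp_pos _).le, Real.rpow_nonneg (AbsoluteValue.nonneg _ _)]
          · have hApos : 0 < Complex.abs (A + t * B) := AbsoluteValue.pos _ hAt
            rw [← Real.log_le_iff_le_exp (by positivity),
              Real.log_mul (by positivity) (by positivity), Real.log_rpow hktpos]
            have h5 : Real.log (Complex.abs (A + t * B))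
                ≤ 1 / 2 * Real.log (1 + ‖a + t • b‖ ^ 2) := by
              calc Real.log (Complex.abs (A + t * B))
                  ≤ Real.log (Real.sqrt (1 + ‖a + t • b‖ ^ 2)) :=
                    (Real.log_le_log_iff hApos (Real.sqrt_pos.mpr (by positivity))).mpr
                      (habsAB t)
                _ = Real.log (1 + ‖a + t • b‖ ^ 2) / 2 := Real.log_sqrt (by positivity)
                _ = 1 / 2 * Real.log (1 + ‖a + t • b‖ ^ 2) := by ring
            have hf' : f (a + t • b) = 1 / 2 * Real.log (1 + ‖a + t • b‖ ^ 2) := rfl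
            rw [hf'] at hreal
            linarith
      have hconc := maxprin ε hε A B α β c r hr p hbd t₀ ht₀
      have hAt₀ : A + t₀ * B = (S : ℂ) := by
        rw [hAB t₀, ← hwdef, inner_self_eq_norm_sq_to_K, div_eq_iff hSne]
        have h6 : S * S = 1 + ‖w‖ ^ 2 := by
          rw [hSdef]; exact Real.mul_self_sqrt (by positivity)
        rw [show (RCLike.ofReal ‖w‖ : ℂ) = ((‖w‖ : ℝ) : ℂ) from rfl]
        norm_cast
        linarith
      rw [hAt₀, Complex.abs_ofReal, abs_of_pos hSpos] at hconc
      rw [hψ' _, if_neg (by rw [hline]; exact hk0), hline t₀, EReal.coe_le_coe_iff]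
      have hkpos : 0 < Complex.abs (α + t₀ * β) := AbsoluteValue.pos _ hk0
      have hlog := (Real.log_le_log_iff (by positivity) (Real.exp_pos _)).mpr hconc
      rw [Real.log_mul hSpos.ne' (by positivity), Real.log_rpow hkpos, Real.log_exp,
        hSdef, Real.log_sqrt (by positivity)] at hlog
      have hf' : f (a + t₀ • b) = 1 / 2 * Real.log (1 + ‖a + t₀ • b‖ ^ 2) := rfl
      rw [hf']
      linarith
  · -- growth bound
    refine ⟨1 / 2 * Real.log 2 + 1, fun z => ?_⟩
    rw [hψ' z]
    split_ifs with hz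
    · exact bot_le
    · rw [EReal.coe_le_coe_iff]
      set t := ‖z‖ with htdef
      have ht0 : 0 ≤ t := norm_nonneg _
      have hu : Complex.abs (z (Fin.last (n' + 1))) ≤ t := coord_abs_le_norm z _
      have hu0 : 0 ≤ Complex.abs (z (Fin.last (n' + 1))) := AbsoluteValue.nonneg _ _
      have habsk : Complex.abs (k z) ≤ 1 + t * (Real.exp (1 / ε) - 1) := by
        calc Complex.abs (k z)
            ≤ Complex.abs 1 + Complex.abs (z (Fin.last (n' + 1))
              * (((Real.exp (1 / ε) : ℝ) : ℂ) - 1)) := AbsoluteValue.add_le _ _ _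
          _ = 1 + Complex.abs (z (Fin.last (n' + 1))) * (Real.exp (1 / ε) - 1) := by
              rw [map_one, map_mul,
                show (((Real.exp (1 / ε) : ℝ) : ℂ) - 1) = ((Real.exp (1 / ε) - 1 : ℝ) : ℂ) by
                  push_cast; ring,
                Complex.abs_ofReal, abs_of_pos (by linarith)]
          _ ≤ 1 + t * (Real.exp (1 / ε) - 1) := by nlinarith
      have e2 : Real.log (Complex.abs (k z)) ≤ 1 / ε + max 0 (Real.log t) := by
        have habskpos : 0 < Complex.abs (k z) := AbsoluteValue.pos _ hz
        rcases le_or_gt t 1 with ht1 | ht1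
        · have h7 : Complex.abs (k z) ≤ Real.exp (1 / ε) := by nlinarith
          have := (Real.log_le_log_iff habskpos (Real.exp_pos _)).mpr h7
          rw [Real.log_exp] at this
          have hmax : (0 : ℝ) ≤ max 0 (Real.log t) := le_max_left _ _
          linarith
        · have h7 : Complex.abs (k z) ≤ Real.exp (1 / ε) * t := by nlinarith
          have h8 := (Real.log_le_log_iff habskpos (by positivity)).mpr h7
          rw [Real.log_mul (Real.exp_ne_zero _) (by linarith), Real.log_exp] at h8
          have hmax : Real.log t ≤ max 0 (Real.log t) := le_max_right _ _
          linarith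
      have e1 : Real.log (1 + t ^ 2) ≤ Real.log 2 + 2 * max 0 (Real.log t) := by
        rcases le_or_gt t 1 with ht1 | ht1
        · have h7 : (1 : ℝ) + t ^ 2 ≤ 2 := by nlinarith
          have := (Real.log_le_log_iff (by positivity) (by norm_num)).mpr h7
          have hmax : (0 : ℝ) ≤ max 0 (Real.log t) := le_max_left _ _
          linarith
        · have h7 : (1 : ℝ) + t ^ 2 ≤ 2 * t ^ 2 := by nlinarith
          have h8 := (Real.log_le_log_iff (by positivity) (by positivity)).mpr h7
          rw [Real.log_mul (by norm_num) (by positivity), Real.log_pow] at h8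
          have hmax : max 0 (Real.log t) = Real.log t :=
            max_eq_right (Real.log_nonneg ht1.le)
          rw [hmax]
          push_cast at h8
          linarith
      have e2' := mul_le_mul_of_nonneg_left e2 hε.le
      have hf' : f z = 1 / 2 * Real.log (1 + t ^ 2) := rfl
      rw [hf']
      have hεinv : ε * (1 / ε) = 1 := by field_simp
      nlinarith [e1, e2']
  · -- value on z_n = 0
    intro z hz
    have hkz : k z = 1 := by rw [hkdef]; simp [hz]
    rw [hψ' z, if_neg (by rw [hkz]; exact one_ne_zero), hkz]
    simp [hfdef]
  · -- value on z_n = 1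
    intro z hz
    have hkz : k z = ((Real.exp (1 / ε) : ℝ) : ℂ) := by rw [hkdef]; simp [hz]
    rw [hψ' z, if_neg (by rw [hkz]; exact_mod_cast (by positivity : (Real.exp (1/ε) : ℝ) ≠ 0)), hkz]
    rw [Complex.abs_ofReal, abs_of_pos (Real.exp_pos _), Real.log_exp]
    have h9 : ε * (1 / ε) = 1 := by field_simp
    rw [h9]
end

section
/- Let X = {(x,y,z) ∈ C³ : 3z = 3xy − x³} and ψ(x,y,z) = max(log|z|, 2·log|x|). Then ψ restricted to X has logarithmic growth: there is a constant C such that ψ(x,y,z) ≤ log⁺‖(x,y,z)‖ + C for all (x,y,z) ∈ X. -/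
open Real

/-- **`ψ` has logarithmic growth on the Cayley surface.**
Let `X = {(x,y,z) ∈ ℂ³ : 3z = 3xy - x³}` and `ψ(x,y,z) = max(log|z|, 2 log|x|)`.
Then there is a constant `C` such that `ψ(x,y,z) ≤ log⁺‖(x,y,z)‖ + C` for all
`(x,y,z) ∈ X`, where `‖·‖` is the Euclidean norm and `log⁺ t = max(0, log t)`. -/
theorem stmt13 :
    ∃ C : ℝ, ∀ x y z : ℂ, 3 * z = 3 * x * y - x ^ 3 →
      max (elog (‖z‖)) ((2 : EReal) * elog (‖x‖)) ≤
        ((max 0 (Real.log (Real.sqrt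
            (‖x‖ ^ 2 + ‖y‖ ^ 2 + ‖z‖ ^ 2))) + C : ℝ) :
          EReal) := by
  use 10
  intro x y z h
  set a := ‖x‖ with ha
  set b := ‖y‖ with hb
  set c := ‖z‖ with hc
  set r := Real.sqrt (a ^ 2 + b ^ 2 + c ^ 2) with hr
  have ha0 : 0 ≤ a := norm_nonneg x
  have hb0 : 0 ≤ b := norm_nonneg y
  have hc0 : 0 ≤ c := norm_nonneg z
  have hr0 : 0 ≤ r := Real.sqrt_nonneg _
  have hrb : b ≤ r := by
    rw [hr]
    calc b = Real.sqrt (b ^ 2) := (Real.sqrt_sq hb0).symm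
    _ ≤ _ := Real.sqrt_le_sqrt (by nlinarith [sq_nonneg a, sq_nonneg c])
  have hrc : c ≤ r := by
    rw [hr]
    calc c = Real.sqrt (c ^ 2) := (Real.sqrt_sq hc0).symm
    _ ≤ _ := Real.sqrt_le_sqrt (by nlinarith [sq_nonneg a, sq_nonneg b])
  have hmax0 : (0 : ℝ) ≤ max 0 (Real.log r) := le_max_left _ _
  have hmaxr : Real.log r ≤ max 0 (Real.log r) := le_max_right _ _
  have h6le : Real.log 6 ≤ 5 := by
    have := Real.log_le_sub_one_of_pos (show (0:ℝ) < 6 by norm_num)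
    linarith
  refine max_le ?_ ?_
  · by_cases hz : c = 0
    · simp [elog, hz]
    · rw [elog, if_neg hz]
      rw [EReal.coe_le_coe_iff]
      have hcpos : 0 < c := lt_of_le_of_ne hc0 (Ne.symm hz)
      have : Real.log c ≤ Real.log r := Real.log_le_log hcpos hrc
      linarith
  · by_cases hx : a = 0
    · rw [elog, if_pos hx, EReal.mul_bot_of_pos (by norm_num)]
      exact bot_le
    · have hxpos : 0 < a := lt_of_le_of_ne ha0 (Ne.symm hx)
      rw [elog, if_neg hx, show (2 : EReal) * (Real.log a : EReal)
          = ((2 * Real.log a : ℝ) : EReal) from (EReal.coe_mul _ _).symm,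
        EReal.coe_le_coe_iff]
      by_cases h6 : a ≤ 6
      · have : Real.log a ≤ Real.log 6 := Real.log_le_log hxpos h6
        linarith
      · push_neg at h6
        have ha2 : 2 * Real.log a = Real.log (a ^ 2) := by
          rw [Real.log_pow]; push_cast; ring
        by_cases hca : c ≤ a ^ 2
        · -- b > a^2/6
          have hxy : x * y = z + x ^ 3 / 3 := by
            have h3 : (3 : ℂ) ≠ 0 := by norm_num
            field_simp
            linear_combination -h
          have habs : a * b = ‖z + x ^ 3 / 3‖ := by
            rw [ha, hb, ← norm_mul, hxy]
          have hcube : ‖x ^ 3 / 3‖ = a ^ 3 / 3 := by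
            rw [norm_div, norm_pow, ha]
            norm_num
          have h1 : a ^ 3 / 3 - c ≤ a * b := by
            have := norm_sub_norm_le (x ^ 3 / (3:ℂ)) (-z)
            simp only [norm_neg, sub_neg_eq_add] at this
            rw [habs]
            rw [hcube] at this
            have : ‖x ^ 3 / 3 + z‖ = ‖z + x ^ 3 / 3‖ := by
              rw [add_comm]
            linarith [norm_sub_norm_le (x ^ 3 / (3:ℂ)) (-z), this]
          have hcube2 : 6 * a ^ 2 < a ^ 3 := by nlinarith [mul_pos hxpos hxpos]
          have hb6 : a ^ 2 < 6 * b := by nlinarith [mul_pos hxpos hxpos, mul_le_mul_of_nonneg_left hca (by norm_num : (0:ℝ) ≤ 6)]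
          have hbpos : 0 < b := by nlinarith
          have l1 : Real.log (a ^ 2) ≤ Real.log (6 * b) :=
            Real.log_le_log (by positivity) hb6.le
          have l2 : Real.log (6 * b) = Real.log 6 + Real.log b :=
            Real.log_mul (by norm_num) (ne_of_gt hbpos)
          have l3 : Real.log b ≤ Real.log r := Real.log_le_log hbpos hrb
          linarith
        · push_neg at hca
          have hcpos : 0 < c := lt_trans (by positivity) hca
          have : Real.log (a ^ 2) ≤ Real.log c := Real.log_le_log (by positivity) hca.le
          have : Real.log c ≤ Real.log r := Real.log_le_log hcpos hrc
          linarith [Real.log_le_log (by positivity : (0:ℝ) < a ^ 2) hca.le]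
end

section
/- Let Θ = {(x,y,z) ∈ C³ : |3z − 3xy + x³| < e^{-3}} and ψ(x,y,z) = max(log|z|, 2log|x|). Then for all (x,y,z) ∈ Θ, ψ(x,y,z) ≤ log‖(x,y,z)‖ + 4, where ‖·‖ is the Euclidean norm. -/
open Real

/-- **`ψ ≤ log‖·‖ + 4` on the tube `Θ` around the Cayley surface.**
Let `Θ = {(x,y,z) ∈ ℂ³ : |3z - 3xy + x³| < e^{-3}}` and
`ψ(x,y,z) = max(log|z|, 2 log|x|)`.  Then `ψ(x,y,z) ≤ log‖(x,y,z)‖ + 4` for all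
`(x,y,z) ∈ Θ`, where `‖·‖` is the Euclidean norm. -/
theorem stmt14 (x y z : ℂ)
    (hΘ : ‖3 * z - 3 * x * y + x ^ 3‖ < Real.exp (-3)) :
    max (elog (‖z‖)) ((2 : EReal) * elog (‖x‖)) ≤
      ((Real.log (Real.sqrt
          (‖x‖ ^ 2 + ‖y‖ ^ 2 + ‖z‖ ^ 2)) + 4 : ℝ) :
        EReal) := by
  set a := ‖x‖ with hadef
  set b := ‖y‖ with hbdef
  set c := ‖z‖ with hcdef
  have ha : 0 ≤ a := norm_nonneg x
  have hb : 0 ≤ b := norm_nonneg y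
  have hc : 0 ≤ c := norm_nonneg z
  set N := Real.sqrt (a ^ 2 + b ^ 2 + c ^ 2) with hNdef
  have hN0 : 0 ≤ N := Real.sqrt_nonneg _
  have hNsq : N ^ 2 = a ^ 2 + b ^ 2 + c ^ 2 := Real.sq_sqrt (by positivity)
  have hNa : a ≤ N := by nlinarith [sq_nonneg b, sq_nonneg c, sq_nonneg (N - a)]
  have hNb : b ≤ N := by nlinarith [sq_nonneg a, sq_nonneg c, sq_nonneg (N - b)]
  have hNc : c ≤ N := by nlinarith [sq_nonneg a, sq_nonneg b, sq_nonneg (N - c)]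
  have h7 : (7 : ℝ) ≤ Real.exp 4 := by
    have h2 : (3 : ℝ) ≤ Real.exp 2 := by nlinarith [Real.add_one_le_exp (2 : ℝ)]
    have h4 : Real.exp 4 = Real.exp 2 * Real.exp 2 := by rw [← Real.exp_add]; norm_num
    nlinarith
  have hkey : a ^ 2 ≤ Real.exp 4 * N := by
    rcases le_or_gt a (Real.exp 4) with hle | hgt
    · nlinarith
    · -- |x| large: use the inequality from hΘ
      have hexp : Real.exp (-3) ≤ 1 := by
        rw [Real.exp_le_one_iff]; norm_num
      have htri : a ^ 3 ≤ Real.exp (-3) + 3 * a * b + 3 * c := by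
        have e1 : ‖x ^ 3‖ =
            ‖(3 * z - 3 * x * y + x ^ 3) + 3 * x * y - 3 * z‖ := by
          congr 1; ring
        have e2 : ‖(3 * z - 3 * x * y + x ^ 3) + 3 * x * y - 3 * z‖ ≤
            ‖3 * z - 3 * x * y + x ^ 3‖ + ‖3 * x * y‖
              + ‖3 * z‖ := by
          calc ‖(3 * z - 3 * x * y + x ^ 3) + 3 * x * y - 3 * z‖
              ≤ ‖(3 * z - 3 * x * y + x ^ 3) + 3 * x * y‖
                + ‖3 * z‖ := by
                exact
                  norm_sub_le ((3 * z - 3 * x * y + x ^ 3) + 3 * x * y) (3 * z)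
            _ ≤ _ := by
                have := norm_add_le (3 * z - 3 * x * y + x ^ 3) (3 * x * y)
                linarith
        have e3 : ‖3 * x * y‖ = 3 * a * b := by
          simp [map_mul, hadef, hbdef]
        have e4 : ‖3 * z‖ = 3 * c := by
          simp [map_mul, hcdef]
        have e6 : a ^ 3 ≤ ‖3 * z - 3 * x * y + x ^ 3‖ + 3 * a * b + 3 * c := by
          calc a ^ 3 = ‖x ^ 3‖ := (norm_pow x 3).symm
            _ = _ := e1
            _ ≤ _ := e2
            _ = _ := by rw [e3, e4]
        linarith [hΘ.le]
      have ha1 : 1 ≤ a := by linarith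
      have hN1 : 1 ≤ N := le_trans ha1 hNa
      have haN : 1 ≤ a * N := one_le_mul_of_one_le_of_one_le ha1 hN1
      have h3' : a ^ 3 ≤ 7 * (a * N) := by nlinarith
      have h2' : a ^ 2 ≤ 7 * N := by nlinarith [mul_pos (show (0:ℝ) < a by linarith) (show (0:ℝ) < N by linarith)]
      nlinarith
  refine max_le ?_ ?_
  · by_cases hz : c = 0
    · simp [elog, hz]
    · have hcpos : 0 < c := lt_of_le_of_ne hc (Ne.symm hz)
      have hNpos : 0 < N := lt_of_lt_of_le hcpos hNc
      rw [elog, if_neg hz]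
      rw [EReal.coe_le_coe_iff]
      have : Real.log c ≤ Real.log N := Real.log_le_log hcpos hNc
      linarith
  · by_cases hx : a = 0
    · rw [elog, if_pos hx, EReal.mul_bot_of_pos (by norm_num : (0:EReal) < 2)]
      exact bot_le
    · have hapos : 0 < a := lt_of_le_of_ne ha (Ne.symm hx)
      have hNpos : 0 < N := lt_of_lt_of_le hapos hNa
      rw [elog, if_neg hx]
      have hco : (2 : EReal) * ((Real.log a : ℝ) : EReal) =
          ((2 * Real.log a : ℝ) : EReal) := by norm_cast
      rw [hco, EReal.coe_le_coe_iff]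
      have h1 : Real.log (a ^ 2) ≤ Real.log (Real.exp 4 * N) :=
        Real.log_le_log (by positivity) hkey
      rw [Real.log_pow, Real.log_mul (Real.exp_ne_zero 4) (ne_of_gt hNpos),
        Real.log_exp] at h1
      push_cast at h1
      linarith
end

section
/- The curve C₁ = {(x, (x²+x)/3, x²/3) : x ∈ C} is contained in the Cayley surface X = {(x,y,z) ∈ C³ : 3z − 3xy + x³ = 0}, and with η = max(log|z|, 2log|x|) restricted to X and ρ(1,p) = (1/2)log(1+‖p‖²), the limit as x → ∞ of η(x,(x²+x)/3, x²/3) − ρ(1, x, (x²+x)/3, x²/3) equals log(3/√2). -/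
open Real Filter Topology

/-- **The limit along the curve `C₁` on the Cayley surface.**
The curve `C₁ = {(x, (x²+x)/3, x²/3) : x ∈ ℂ}` is contained in the Cayley surface
`X = {(x,y,z) ∈ ℂ³ : 3z - 3xy + x³ = 0}`, and with `η = max(log|z|, 2 log|x|)` and
`ρ(1,p) = (1/2) log(1+‖p‖²)` (Euclidean norm), the limit as `x → ∞` of
`η(x, (x²+x)/3, x²/3) - ρ(1, x, (x²+x)/3, x²/3)` equals `log(3/√2)`. -/
theorem stmt18 :
    (∀ x : ℂ, 3 * (x ^ 2 / 3) - 3 * x * ((x ^ 2 + x) / 3) + x ^ 3 = 0) ∧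
    Filter.Tendsto (fun x : ℂ =>
        max (Real.log (‖x ^ 2 / 3‖)) (2 * Real.log (‖x‖)) -
          (1 / 2) * Real.log (1 + ‖x‖ ^ 2 +
            ‖(x ^ 2 + x) / 3‖ ^ 2 + ‖x ^ 2 / 3‖ ^ 2))
      (Filter.cocompact ℂ) (𝓝 (Real.log (3 / Real.sqrt 2))) := by
  constructor
  · intro x; ring
  · have h1 : Tendsto (fun x : ℂ => ‖x‖) (cocompact ℂ) atTop := by
      exact tendsto_norm_cocompact_atTop (E := ℂ)
    have hinv : Tendsto (fun x : ℂ => x⁻¹) (cocompact ℂ) (𝓝 0) := by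
      rw [← Metric.cobounded_eq_cocompact]; exact Filter.tendsto_inv₀_cobounded
    have h0 : Tendsto (fun x : ℂ => ‖x‖⁻¹) (cocompact ℂ) (𝓝 0) :=
      h1.inv_tendsto_atTop
    have ha : Tendsto (fun x : ℂ => ‖1 + x⁻¹‖) (cocompact ℂ) (𝓝 1) := by
      have h2 : Tendsto (fun x : ℂ => (1:ℂ) + x⁻¹) (cocompact ℂ) (𝓝 1) := by
        simpa using hinv.const_add (1:ℂ)
      simpa [Function.comp_def] using (continuous_norm.tendsto (1:ℂ)).comp h2
    have hh : Tendsto (fun x : ℂ => ‖x‖⁻¹ ^ 4 + ‖x‖⁻¹ ^ 2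
        + ‖1 + x⁻¹‖ ^ 2 / 9 + 1 / 9) (cocompact ℂ) (𝓝 (2/9)) := by
      have h3 := (((h0.pow 4).add (h0.pow 2)).add ((ha.pow 2).div_const 9)).add_const (1/9 : ℝ)
      convert h3 using 2
      norm_num
    have hlog : Tendsto (fun x : ℂ => -(1/2) * Real.log (‖x‖⁻¹ ^ 4
        + ‖x‖⁻¹ ^ 2 + ‖1 + x⁻¹‖ ^ 2 / 9 + 1 / 9))
        (cocompact ℂ) (𝓝 (-(1/2) * Real.log (2/9))) :=
      ((Real.continuousAt_log (by norm_num)).tendsto.comp hh).const_mul _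
    have hL : -(1/2) * Real.log (2/9) = Real.log (3 / Real.sqrt 2) := by
      have hs : Real.sqrt 2 ≠ 0 := by positivity
      rw [Real.log_div (by norm_num : (3:ℝ) ≠ 0) hs,
        Real.log_div (by norm_num : (2:ℝ) ≠ 0) (by norm_num : (9:ℝ) ≠ 0),
        Real.log_sqrt (by norm_num), show (9:ℝ) = 3 ^ 2 by norm_num, Real.log_pow]
      push_cast; ring
    rw [← hL]
    refine hlog.congr' ?_
    filter_upwards [h1.eventually_ge_atTop 1] with x hx1
    have hxpos : 0 < ‖x‖ := lt_of_lt_of_le one_pos hx1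
    have hx0 : x ≠ 0 := by
      intro h; rw [h] at hxpos; simp at hxpos
    set a := ‖x‖ with hadef
    have habs2 : ‖x ^ 2 / 3‖ = a ^ 2 / 3 := by
      rw [norm_div, norm_pow, ← hadef]; norm_num
    have habsy : ‖(x ^ 2 + x) / 3‖ = a ^ 2 * ‖1 + x⁻¹‖ / 3 := by
      have : x ^ 2 + x = x ^ 2 * (1 + x⁻¹) := by field_simp
      rw [this, norm_div, norm_mul, norm_pow, ← hadef]; norm_num
    set b := ‖1 + x⁻¹‖ with hbdef
    have hb0 : 0 ≤ b := norm_nonneg _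
    have hS : 1 + a ^ 2 + ‖(x ^ 2 + x) / 3‖ ^ 2 + ‖x ^ 2 / 3‖ ^ 2
        = a ^ 4 * (a⁻¹ ^ 4 + a⁻¹ ^ 2 + b ^ 2 / 9 + 1 / 9) := by
      rw [habs2, habsy]
      field_simp
      ring
    have hmax : max (Real.log (‖x ^ 2 / 3‖)) (2 * Real.log a)
        = 2 * Real.log a := by
      apply max_eq_right
      rw [habs2, Real.log_div (by positivity) (by norm_num), Real.log_pow]
      have : 0 ≤ Real.log 3 := Real.log_nonneg (by norm_num)
      push_cast
      linarith
    have hhpos : 0 < a⁻¹ ^ 4 + a⁻¹ ^ 2 + b ^ 2 / 9 + 1 / 9 := by positivity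
    rw [hmax, hS, Real.log_mul (by positivity) (ne_of_gt hhpos),
      show Real.log (a ^ 4) = 4 * Real.log a by rw [Real.log_pow]; push_cast; ring]
    ring
end
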